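/- arXiv:1606.04048 — 2 statements merged into one kernel-verified Lean document; each statement's English description precedes it below -/
import Mathlib

section
/- Let m ≥ 3 and d ≥ 1 be integers with γ = gcd(m,d), d₁ = d/γ, m₁ = m/γ, and give both variables y₁, y₂ weight d₁. For an integer k with 1 ≤ k ≤ d, the space of weighted homogeneous polynomials in ℂ[y₁,y₂] of weighted degree d₁(m−2) − k·m₁ is nonzero if and only if k = k₁·d₁ for some integer k₁ with 1 ≤ k₁ ≤ γ−1 and k₁·m₁ ≤ m−2. -/
open MvPolynomial

/-- With both variables of weight `d₁ = d / gcd(m,d)`, for `1 ≤ k ≤ d` the space of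
weighted homogeneous polynomials of weighted degree `d₁(m−2) − k·m₁` is nonzero iff
`k = k₁·d₁` for some `1 ≤ k₁ ≤ γ − 1` with `k₁·m₁ ≤ m − 2`. -/
theorem weighted_homog_suspension_td (m d k : ℕ) (hm : 3 ≤ m) (hd : 1 ≤ d)
    (hk : 1 ≤ k) (hk' : k ≤ d) :
    Submodule.span ℂ {p : MvPolynomial (Fin 2) ℂ |
        ∃ a b : ℕ, ((d / Nat.gcd m d : ℕ) : ℤ) * ((a : ℤ) + b)
          = ((d / Nat.gcd m d : ℕ) : ℤ) * ((m : ℤ) - 2) - (k : ℤ) * (m / Nat.gcd m d : ℕ)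
        ∧ p = X 0 ^ a * X 1 ^ b} ≠ ⊥
      ↔ ∃ k₁ : ℕ, 1 ≤ k₁ ∧ k₁ ≤ Nat.gcd m d - 1 ∧ k₁ * (m / Nat.gcd m d) ≤ m - 2
          ∧ k = k₁ * (d / Nat.gcd m d) := by
  set γ := Nat.gcd m d with hγ
  set d₁ := d / γ with hd₁
  set m₁ := m / γ with hm₁
  have hγpos : 0 < γ := Nat.gcd_pos_of_pos_right m hd
  have hdd : d₁ * γ = d := Nat.div_mul_cancel (Nat.gcd_dvd_right m d)
  have hmm : m₁ * γ = m := Nat.div_mul_cancel (Nat.gcd_dvd_left m d)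
  have hd₁pos : 0 < d₁ := by
    rcases Nat.eq_zero_or_pos d₁ with h | h
    · simp [h] at hdd; omega
    · exact h
  have hm₁pos : 0 < m₁ := by
    rcases Nat.eq_zero_or_pos m₁ with h | h
    · simp [h] at hmm; omega
    · exact h
  have hcop : Nat.Coprime m₁ d₁ := Nat.coprime_div_gcd_div_gcd hγpos
  -- reduce the span condition to existence of exponents
  have key : (Submodule.span ℂ {p : MvPolynomial (Fin 2) ℂ |
        ∃ a b : ℕ, ((d₁ : ℕ) : ℤ) * ((a : ℤ) + b)
          = ((d₁ : ℕ) : ℤ) * ((m : ℤ) - 2) - (k : ℤ) * (m₁ : ℕ)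
        ∧ p = X 0 ^ a * X 1 ^ b} ≠ ⊥)
      ↔ ∃ a b : ℕ, ((d₁ : ℕ) : ℤ) * ((a : ℤ) + b)
          = ((d₁ : ℕ) : ℤ) * ((m : ℤ) - 2) - (k : ℤ) * (m₁ : ℕ) := by
    rw [Ne, Submodule.span_eq_bot]
    push_neg
    constructor
    · rintro ⟨x, ⟨a, b, heq, rfl⟩, -⟩
      exact ⟨a, b, heq⟩
    · rintro ⟨a, b, heq⟩
      refine ⟨X 0 ^ a * X 1 ^ b, ⟨a, b, heq, rfl⟩, ?_⟩
      exact mul_ne_zero (pow_ne_zero _ (X_ne_zero 0)) (pow_ne_zero _ (X_ne_zero 1))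
  rw [key]
  constructor
  · rintro ⟨a, b, heq⟩
    have hdvd : (d₁ : ℤ) ∣ (k : ℤ) * m₁ := ⟨((m : ℤ) - 2) - ((a : ℤ) + b), by linarith⟩
    have hdvdn : d₁ ∣ k * m₁ := by exact_mod_cast hdvd
    have hdk : d₁ ∣ k := Nat.Coprime.dvd_of_dvd_mul_right hcop.symm hdvdn
    obtain ⟨k₁, hk₁⟩ := hdk
    have hk₁pos : 1 ≤ k₁ := by
      rcases Nat.eq_zero_or_pos k₁ with h | h
      · subst h; simp at hk₁; omega
      · exact h
    -- from the equation: a + b = (m - 2) - k₁ * m₁ in ℤ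
    have heq2 : ((a : ℤ) + b) = ((m : ℤ) - 2) - (k₁ : ℤ) * m₁ := by
      have hkc : (k : ℤ) = (d₁ : ℤ) * k₁ := by exact_mod_cast hk₁
      have hd₁z : (0 : ℤ) < (d₁ : ℤ) := by exact_mod_cast hd₁pos
      have := heq
      rw [hkc] at this
      have h2 : ((d₁ : ℤ)) * ((a : ℤ) + b) = (d₁ : ℤ) * (((m : ℤ) - 2) - (k₁ : ℤ) * m₁) := by
        ring_nf
        ring_nf at this
        linarith
      exact mul_left_cancel₀ (ne_of_gt hd₁z) h2
    have hle : k₁ * m₁ ≤ m - 2 := by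
      have h0 : (0 : ℤ) ≤ (a : ℤ) + b := by positivity
      have : ((k₁ * m₁ : ℕ) : ℤ) ≤ (m : ℤ) - 2 := by push_cast; linarith
      omega
    have hk₁γ : k₁ ≤ γ := by
      have : d₁ * k₁ ≤ d₁ * γ := by rw [hdd, ← hk₁]; exact hk'
      exact Nat.le_of_mul_le_mul_left this hd₁pos
    have hk₁ne : k₁ ≠ γ := by
      intro h
      rw [h] at hle
      have : γ * m₁ = m := by rw [Nat.mul_comm]; exact hmm
      omega
    exact ⟨k₁, hk₁pos, by omega, hle, by rw [hk₁, Nat.mul_comm]⟩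
  · rintro ⟨k₁, h1, h2, h3, rfl⟩
    refine ⟨m - 2 - k₁ * m₁, 0, ?_⟩
    have hc1 : ((m - 2 - k₁ * m₁ : ℕ) : ℤ) = (m : ℤ) - 2 - (k₁ : ℤ) * m₁ := by
      push_cast [Nat.cast_sub h3, Nat.cast_sub (by omega : 2 ≤ m)]
      ring
    rw [hc1]
    push_cast
    ring
end

section
/- Let b₁,…,b_r be distinct points of ℂⁿ, let a₁,…,a_r be positive integers, and let N ≥ a₁ + ⋯ + a_r − 1. Then the evaluation (jet) map from the space of polynomials in ℂ[x₁,…,xₙ] of degree ≤ N to the direct sum ⊕ᵢ ℂ[x]/𝔪_{bᵢ}^{aᵢ}, sending a polynomial h to the tuple of its residue classes modulo the powers 𝔪_{bᵢ}^{aᵢ} of the maximal ideals at the points bᵢ, is surjective. -/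
open MvPolynomial

section Aux

variable {n : ℕ}

/-- A product of powers of elements of an ideal lies in the corresponding power. -/
lemma prod_pow_mem_pow {R : Type*} [CommRing R] (I : Ideal R) {ι : Type*}
    (t : Finset ι) (x : ι → R) (e : ι → ℕ) (hx : ∀ i ∈ t, x i ∈ I) :
    (∏ i ∈ t, x i ^ e i) ∈ I ^ (∑ i ∈ t, e i) := by
  classical
  induction t using Finset.induction_on with
  | empty => simp [Ideal.one_eq_top]
  | insert a s hat ih =>
    rw [Finset.prod_insert hat, Finset.sum_insert hat, pow_add]
    exact Ideal.mul_mem_mul (Ideal.pow_mem_pow (hx a (Finset.mem_insert_self a s)) _)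
      (ih fun i hi => hx i (Finset.mem_insert_of_mem hi))

/-- A monomial of degree at least `a` lies in the `a`-th power of the irrelevant ideal. -/
lemma monomial_mem_pow_span_X (a : ℕ) (s : Fin n →₀ ℕ)
    (hs : a ≤ s.sum fun _ e => e) (d : ℂ) :
    monomial s d ∈ (Ideal.span (Set.range (X : Fin n → MvPolynomial (Fin n) ℂ))) ^ a := by
  have h1 : (s.prod fun j e => (X j : MvPolynomial (Fin n) ℂ) ^ e) ∈
      (Ideal.span (Set.range (X : Fin n → MvPolynomial (Fin n) ℂ))) ^ (s.sum fun _ e => e) := by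
    rw [Finsupp.prod]
    have := prod_pow_mem_pow (Ideal.span (Set.range (X : Fin n → MvPolynomial (Fin n) ℂ)))
      s.support (fun j => (X j : MvPolynomial (Fin n) ℂ)) (fun j => s j)
      (fun i _ => Ideal.subset_span ⟨i, rfl⟩)
    simpa [Finsupp.sum] using this
  have h2 := Ideal.pow_le_pow_right (I := Ideal.span (Set.range
      (X : Fin n → MvPolynomial (Fin n) ℂ))) hs h1
  rw [monomial_eq]
  exact Ideal.mul_mem_left _ _ h2

/-- Low-degree representatives modulo powers of the irrelevant ideal. -/
lemma exists_lowdeg_rep_zero (a : ℕ) (ha : 1 ≤ a) (p : MvPolynomial (Fin n) ℂ) :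
    ∃ g : MvPolynomial (Fin n) ℂ, g.totalDegree ≤ a - 1 ∧
      p - g ∈ (Ideal.span (Set.range (X : Fin n → MvPolynomial (Fin n) ℂ))) ^ a := by
  classical
  set g : MvPolynomial (Fin n) ℂ :=
    ∑ s ∈ p.support.filter (fun s => (s.sum fun _ e => e) ≤ a - 1),
      monomial s (coeff s p) with hg
  refine ⟨g, ?_, ?_⟩
  · refine (totalDegree_finset_sum _ _).trans (Finset.sup_le fun s hs => ?_)
    rw [Finset.mem_filter] at hs
    exact (totalDegree_monomial_le _ _).trans hs.2
  · have hsplit : p - g =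
        ∑ s ∈ p.support.filter (fun s => ¬ (s.sum fun _ e => e) ≤ a - 1),
          monomial s (coeff s p) := by
      conv_lhs => rw [p.as_sum]
      rw [hg, ← Finset.sum_filter_add_sum_filter_not p.support
        (fun s => (s.sum fun _ e => e) ≤ a - 1) (fun s => monomial s (coeff s p))]
      ring
    rw [hsplit]
    refine Ideal.sum_mem _ fun s hs => ?_
    rw [Finset.mem_filter] at hs
    exact monomial_mem_pow_span_X a s (by omega) _

/-- Degree bound for substitution of polynomials of degree at most 1. -/
lemma totalDegree_aeval_le_of_deg_one (f : Fin n → MvPolynomial (Fin n) ℂ)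
    (hf : ∀ j, (f j).totalDegree ≤ 1) (p : MvPolynomial (Fin n) ℂ) :
    (aeval f p).totalDegree ≤ p.totalDegree := by
  classical
  conv_lhs => rw [p.as_sum]
  rw [map_sum]
  refine (totalDegree_finset_sum _ _).trans (Finset.sup_le fun s hs => ?_)
  have : (aeval f) (monomial s (coeff s p)) =
      C (coeff s p) * ∏ j ∈ s.support, f j ^ s j := by
    rw [monomial_eq, map_mul, Finsupp.prod, map_prod]
    simp [algebraMap_eq]
  rw [this]
  refine (totalDegree_mul _ _).trans ?_
  have h1 : (∏ j ∈ s.support, f j ^ s j).totalDegree ≤ s.sum fun _ e => e := by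
    refine (totalDegree_finset_prod _ _).trans ?_
    rw [Finsupp.sum]
    refine Finset.sum_le_sum fun j _ => ?_
    exact (totalDegree_pow _ _).trans (by
      have := hf j; nlinarith [hf j])
  have h2 : (s.sum fun _ e => e) ≤ p.totalDegree := le_totalDegree hs
  simp only [totalDegree_C, zero_add]
  omega

lemma deg_one_sub (j : Fin n) (c : ℂ) :
    ((X j - C c : MvPolynomial (Fin n) ℂ)).totalDegree ≤ 1 := by
  rw [sub_eq_add_neg, ← C_neg]
  refine (totalDegree_add _ _).trans ?_
  simp [totalDegree_X]

lemma deg_one_add (j : Fin n) (c : ℂ) :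
    ((X j + C c : MvPolynomial (Fin n) ℂ)).totalDegree ≤ 1 := by
  refine (totalDegree_add _ _).trans ?_
  simp [totalDegree_X]

/-- Low-degree representatives modulo powers of the maximal ideal at any point. -/
lemma exists_lowdeg_rep (c : Fin n → ℂ) (a : ℕ) (ha : 1 ≤ a) (p : MvPolynomial (Fin n) ℂ) :
    ∃ g : MvPolynomial (Fin n) ℂ, g.totalDegree ≤ a - 1 ∧
      p - g ∈ (Ideal.span (Set.range fun j : Fin n => X j - C (c j))) ^ a := by
  classical
  set T : MvPolynomial (Fin n) ℂ →ₐ[ℂ] MvPolynomial (Fin n) ℂ :=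
    aeval (fun j : Fin n => X j - C (c j)) with hT
  set S : MvPolynomial (Fin n) ℂ →ₐ[ℂ] MvPolynomial (Fin n) ℂ :=
    aeval (fun j : Fin n => X j + C (c j)) with hS
  have hTS : ∀ q, T (S q) = q := by
    intro q
    have hcomp : T.comp S = AlgHom.id ℂ _ := by
      apply MvPolynomial.algHom_ext
      intro j
      simp [hT, hS]
    have h3 : T (S q) = (T.comp S) q := rfl
    rw [h3, hcomp, AlgHom.id_apply]
  obtain ⟨g₀, hg₀deg, hg₀mem⟩ := exists_lowdeg_rep_zero a ha (S p)
  refine ⟨T g₀, ?_, ?_⟩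
  · exact (totalDegree_aeval_le_of_deg_one _ (fun j => deg_one_sub j (c j)) g₀).trans hg₀deg
  · have hmap : Ideal.map T ((Ideal.span (Set.range (X : Fin n → MvPolynomial (Fin n) ℂ))) ^ a)
        ≤ (Ideal.span (Set.range fun j : Fin n => X j - C (c j))) ^ a := by
      rw [Ideal.map_pow]
      refine Ideal.pow_right_mono ?_ a
      rw [Ideal.map_span]
      refine Ideal.span_le.mpr ?_
      rintro _ ⟨_, ⟨j, rfl⟩, rfl⟩
      exact Ideal.subset_span ⟨j, by simp [hT]⟩
    have : T (S p - g₀) ∈ Ideal.map T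
        ((Ideal.span (Set.range (X : Fin n → MvPolynomial (Fin n) ℂ))) ^ a) :=
      Ideal.mem_map_of_mem _ hg₀mem
    rw [map_sub, hTS] at this
    exact hmap this

/-- Any polynomial is congruent to its value modulo the maximal ideal at a point. -/
lemma sub_C_eval_mem (c : Fin n → ℂ) (p : MvPolynomial (Fin n) ℂ) :
    p - C (eval c p) ∈ Ideal.span (Set.range fun j : Fin n => X j - C (c j)) := by
  induction p using MvPolynomial.induction_on with
  | C d => simp
  | add p q hp hq =>
    have : p + q - C (eval c (p + q)) = (p - C (eval c p)) + (q - C (eval c q)) := by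
      rw [map_add, C_add]; ring
    rw [this]; exact Ideal.add_mem _ hp hq
  | mul_X p j hp =>
    have : p * X j - C (eval c (p * X j)) =
        p * (X j - C (c j)) + (p - C (eval c p)) * C (c j) := by
      rw [map_mul, eval_X, C_mul]; ring
    rw [this]
    exact Ideal.add_mem _ (Ideal.mul_mem_left _ _ (Ideal.subset_span ⟨j, rfl⟩))
      (Ideal.mul_mem_right _ _ hp)

/-- A polynomial not vanishing at `c` is invertible modulo any power of the maximal
ideal at `c`. -/
lemma exists_inverse_mod (c : Fin n → ℂ) (a : ℕ) (q : MvPolynomial (Fin n) ℂ)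
    (hq : eval c q ≠ 0) :
    ∃ s : MvPolynomial (Fin n) ℂ,
      s * q - 1 ∈ (Ideal.span (Set.range fun j : Fin n => X j - C (c j))) ^ a := by
  set I := Ideal.span (Set.range fun j : Fin n => X j - C (c j)) with hI
  set d := eval c q with hd
  have h1 : C d⁻¹ * q - 1 ∈ I := by
    have : C d⁻¹ * q - 1 = C d⁻¹ * (q - C d) := by
      rw [mul_sub, ← C_mul, inv_mul_cancel₀ hq, C_1]
    rw [this]
    exact Ideal.mul_mem_left _ _ (sub_C_eval_mem c q)
  set t : MvPolynomial (Fin n) ℂ := 1 - C d⁻¹ * q with ht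
  have htI : t ∈ I := by
    have : t = -(C d⁻¹ * q - 1) := by rw [ht]; ring
    rw [this]; exact neg_mem h1
  refine ⟨C d⁻¹ * ∑ m ∈ Finset.range a, t ^ m, ?_⟩
  have hgeom : (∑ m ∈ Finset.range a, t ^ m) * (t - 1) = t ^ a - 1 := geom_sum_mul t a
  have : C d⁻¹ * (∑ m ∈ Finset.range a, t ^ m) * q - 1 = -(t ^ a) := by
    have ht1 : t - 1 = -(C d⁻¹ * q) := by rw [ht]; ring
    have := hgeom
    rw [ht1] at this
    -- (∑ t^m) * (-(C d⁻¹ * q)) = t^a - 1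
    have h2 : C d⁻¹ * (∑ m ∈ Finset.range a, t ^ m) * q = 1 - t ^ a := by
      have h3 : (∑ m ∈ Finset.range a, t ^ m) * (C d⁻¹ * q) = 1 - t ^ a := by
        have := congrArg Neg.neg this
        rw [neg_sub] at this
        rw [← this]; ring
      rw [← h3]; ring
    rw [h2]; ring
  rw [this]
  exact neg_mem (Ideal.pow_mem_pow htI a)

end Aux

/-- Jet interpolation: given distinct points `b₁,…,b_r` of `ℂⁿ`, positive integers
`a₁,…,a_r` and `N ≥ Σ aᵢ − 1`, the evaluation map from polynomials of degree `≤ N`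
to `⊕ᵢ ℂ[x]/𝔪_{bᵢ}^{aᵢ}` is surjective. -/
theorem jet_evaluation_surjective (n r : ℕ) (b : Fin r → Fin n → ℂ)
    (hb : Function.Injective b) (a : Fin r → ℕ) (ha : ∀ i, 1 ≤ a i)
    (N : ℕ) (hN : (∑ i, a i) - 1 ≤ N)
    (f : ∀ i : Fin r, MvPolynomial (Fin n) ℂ ⧸
      (Ideal.span (Set.range fun j : Fin n => X j - C (b i j))) ^ (a i)) :
    ∃ p : MvPolynomial (Fin n) ℂ, p.totalDegree ≤ N ∧
      ∀ i : Fin r, Ideal.Quotient.mk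
        ((Ideal.span (Set.range fun j : Fin n => X j - C (b i j))) ^ (a i)) p = f i := by
  classical
  set I : Fin r → Ideal (MvPolynomial (Fin n) ℂ) :=
    fun i => Ideal.span (Set.range fun j : Fin n => X j - C (b i j)) with hI
  -- separating coordinates
  have hsep : ∀ i j : Fin r, i ≠ j → ∃ k : Fin n, b i k ≠ b j k := by
    intro i j hij
    by_contra h
    push_neg at h
    exact hij (hb (funext h))
  choose k hk using hsep
  -- building blocks
  set G : Fin r → Fin r → MvPolynomial (Fin n) ℂ := fun i j =>
    if h : i = j then 1 else (X (k i j h) - C (b j (k i j h))) ^ (a j) with hG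
  set Q : Fin r → MvPolynomial (Fin n) ℂ :=
    fun i => ∏ j ∈ Finset.univ.erase i, G i j with hQ
  have hGdeg : ∀ i j, (G i j).totalDegree ≤ a j ∨ G i j = 1 := by
    intro i j
    by_cases h : i = j
    · right; simp [hG, h]
    · left
      simp only [hG, dif_neg h]
      refine (totalDegree_pow _ _).trans ?_
      have := deg_one_sub (k i j h) (b j (k i j h))
      nlinarith
  have hGdeg' : ∀ i j, j ≠ i → (G i j).totalDegree ≤ a j := by
    intro i j hji
    rcases hGdeg i j with h | h
    · exact h
    · rw [h]; simp
  have hQdeg : ∀ i, (Q i).totalDegree ≤ ∑ j ∈ Finset.univ.erase i, a j := by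
    intro i
    refine (totalDegree_finset_prod _ _).trans ?_
    refine Finset.sum_le_sum fun j hj => ?_
    exact hGdeg' i j (Finset.ne_of_mem_erase hj)
  have hQeval : ∀ i, eval (b i) (Q i) ≠ 0 := by
    intro i
    rw [hQ]
    simp only [map_prod]
    rw [Finset.prod_ne_zero_iff]
    intro j hj
    have hij : i ≠ j := fun h => (Finset.ne_of_mem_erase hj) h.symm
    simp only [hG, dif_neg hij, map_pow, map_sub, eval_X, eval_C]
    exact pow_ne_zero _ (sub_ne_zero_of_ne (hk i j hij))
  have hQmem : ∀ i j, j ≠ i → Q j ∈ I i ^ a i := by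
    intro i j hji
    have hji' : j ≠ i := hji
    have hi : i ∈ Finset.univ.erase j := Finset.mem_erase.mpr ⟨fun h => hji h.symm, Finset.mem_univ i⟩
    have : Q j = G j i * ∏ x ∈ (Finset.univ.erase j).erase i, G j x :=
      (Finset.mul_prod_erase _ _ hi).symm
    rw [this]
    refine Ideal.mul_mem_right _ _ ?_
    simp only [hG, dif_neg hji']
    have hbase : (X (k j i hji') - C (b i (k j i hji'))) ∈ I i := by
      rw [hI]; exact Ideal.subset_span ⟨k j i hji', rfl⟩
    exact Ideal.pow_mem_pow hbase _
  -- inverses and representatives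
  have hinv : ∀ i, ∃ s, s * Q i - 1 ∈ I i ^ a i :=
    fun i => exists_inverse_mod (b i) (a i) (Q i) (hQeval i)
  choose s hs using hinv
  have hrep : ∀ i, ∃ p₀, Ideal.Quotient.mk (I i ^ a i) p₀ = f i :=
    fun i => Ideal.Quotient.mk_surjective (f i)
  choose p₀ hp₀ using hrep
  have hlow : ∀ i, ∃ g, g.totalDegree ≤ a i - 1 ∧ p₀ i * s i - g ∈ I i ^ a i :=
    fun i => exists_lowdeg_rep (b i) (a i) (ha i) (p₀ i * s i)
  choose h hhdeg hhmem using hlow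
  refine ⟨∑ i, h i * Q i, ?_, ?_⟩
  · refine (totalDegree_finset_sum _ _).trans (Finset.sup_le fun i _ => ?_)
    refine (totalDegree_mul _ _).trans ?_
    have h1 := hhdeg i
    have h2 := hQdeg i
    have h3 : a i + ∑ j ∈ Finset.univ.erase i, a j = ∑ j, a j :=
      Finset.add_sum_erase _ _ (Finset.mem_univ i)
    have h4 := ha i
    omega
  · intro i
    rw [← hp₀ i, Ideal.Quotient.mk_eq_mk_iff_sub_mem]
    have hi : i ∈ (Finset.univ : Finset (Fin r)) := Finset.mem_univ i
    have hsplit : (∑ j, h j * Q j) - p₀ i =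
        (h i * Q i - p₀ i) + ∑ j ∈ Finset.univ.erase i, h j * Q j := by
      rw [← Finset.add_sum_erase _ (fun j => h j * Q j) hi]; ring
    rw [hsplit]
    refine Ideal.add_mem _ ?_ (Ideal.sum_mem _ fun j hj => ?_)
    · have hkey : h i * Q i - p₀ i =
          -((p₀ i * s i - h i) * Q i) + p₀ i * (s i * Q i - 1) := by ring
      rw [hkey]
      exact Ideal.add_mem _ (neg_mem (Ideal.mul_mem_right _ _ (hhmem i)))
        (Ideal.mul_mem_left _ _ (hs i))
    · exact Ideal.mul_mem_left _ _ (hQmem i j (Finset.ne_of_mem_erase hj))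
end
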